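/- Let λ ∈ ℝ and l = −1/2 + iλ. For m, n ∈ ℤ, the function x ↦ e_m^l(x) · conj(e_n^l(x)) is integrable on ℝ and ∫_ℝ e_m^l(x) · conj(e_n^l(x)) dx = 1 if m = n and = 0 if m ≠ n; that is, the family (e_m^l)_{m∈ℤ} is orthonormal in L²(ℝ, ℂ). -/

import Mathlib

open MeasureTheory
open scoped ComplexConjugate
open Complex Filter

/-- The elliptic basis functions `e_m^l(x) = π^{-1/2} ((x-i)/(x+i))^m (1+x²)^l`
for `l = -1/2 + iλ`. -/
noncomputable def ellipticBasis (lam : ℝ) (m : ℤ) (x : ℝ) : ℂ :=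
  (Real.pi : ℂ) ^ (-(1/2) : ℂ) * (((x : ℂ) - Complex.I) / ((x : ℂ) + Complex.I)) ^ m *
    ((1 + x ^ 2 : ℝ) : ℂ) ^ (-(1/2) + Complex.I * lam : ℂ)

noncomputable def uu (x : ℝ) : ℂ := ((x : ℂ) - Complex.I) / ((x : ℂ) + Complex.I)

lemma hsub_ne (x : ℝ) : (x : ℂ) - Complex.I ≠ 0 := by
  intro h
  have := congrArg Complex.im h
  simp at this

lemma hadd_ne (x : ℝ) : (x : ℂ) + Complex.I ≠ 0 := by
  intro h
  have := congrArg Complex.im h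
  simp at this

lemma uu_ne (x : ℝ) : uu x ≠ 0 := div_ne_zero (hsub_ne x) (hadd_ne x)

lemma conj_uu (x : ℝ) : conj (uu x) = (uu x)⁻¹ := by
  simp [uu, map_div₀, Complex.conj_ofReal, inv_div, sub_eq_add_neg]

lemma norm_uu (x : ℝ) : ‖uu x‖ = 1 := by
  have h : ‖(x:ℂ) - Complex.I‖ = ‖(x:ℂ) + Complex.I‖ := by
    rw [← Complex.norm_conj ((x:ℂ) + Complex.I)]
    simp [Complex.conj_ofReal, sub_eq_add_neg]
  rw [uu, norm_div, h, div_self (norm_ne_zero_iff.mpr (hadd_ne x))]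

lemma conj_real_cpow (r : ℝ) (hr : 0 < r) (c : ℂ) :
    conj ((r : ℂ) ^ c) = (r : ℂ) ^ (conj c) := by
  have harg : ((r : ℂ)).arg ≠ Real.pi := by
    rw [Complex.arg_ofReal_of_nonneg hr.le]
    exact fun h => Real.pi_ne_zero h.symm
  have := Complex.conj_cpow (r : ℂ) (conj c) harg
  rw [Complex.conj_ofReal, conj_conj] at this
  exact this.symm

lemma key (lam : ℝ) (m n : ℤ) (x : ℝ) :
    ellipticBasis lam m x * conj (ellipticBasis lam n x)
      = (Real.pi : ℂ)⁻¹ * uu x ^ (m - n) * ((1 + x ^ 2 : ℝ) : ℂ)⁻¹ := by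
  have hπ : (Real.pi : ℂ) ≠ 0 := Complex.ofReal_ne_zero.mpr Real.pi_ne_zero
  have hb : ((1 + x ^ 2 : ℝ) : ℂ) ≠ 0 := by
    rw [Complex.ofReal_ne_zero]; positivity
  unfold ellipticBasis
  rw [map_mul, map_mul, conj_real_cpow _ Real.pi_pos, conj_real_cpow _ (by positivity)]
  rw [show (((x : ℂ) - Complex.I) / ((x : ℂ) + Complex.I)) = uu x from rfl,
    map_zpow₀, conj_uu, inv_zpow, ← zpow_neg]
  have hc1 : conj (-(1/2) : ℂ) = -(1/2) := by simp [map_ofNat]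
  have hc2 : conj (-(1/2) + Complex.I * lam : ℂ) = -(1/2) - Complex.I * lam := by
    simp [Complex.conj_ofReal, map_ofNat]; ring
  rw [hc1, hc2]
  have e1 : (Real.pi : ℂ) ^ (-(1/2) : ℂ) * (Real.pi : ℂ) ^ (-(1/2) : ℂ)
      = (Real.pi : ℂ)⁻¹ := by
    rw [← Complex.cpow_add _ _ hπ]; norm_num [Complex.cpow_neg_one]
  have e2 : ((1 + x ^ 2 : ℝ) : ℂ) ^ (-(1/2) + Complex.I * lam : ℂ) *
      ((1 + x ^ 2 : ℝ) : ℂ) ^ (-(1/2) - Complex.I * lam : ℂ)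
      = ((1 + x ^ 2 : ℝ) : ℂ)⁻¹ := by
    rw [← Complex.cpow_add _ _ hb]; norm_num [Complex.cpow_neg_one]
  have e3 : uu x ^ m * uu x ^ (-n : ℤ) = uu x ^ (m - n) := by
    rw [← zpow_add₀ (uu_ne x)]; ring_nf
  calc (Real.pi:ℂ) ^ (-(1/2):ℂ) * uu x ^ m * ((1+x^2:ℝ):ℂ) ^ (-(1/2) + Complex.I * lam : ℂ)
        * ((Real.pi:ℂ) ^ (-(1/2):ℂ) * uu x ^ (-n:ℤ) * ((1+x^2:ℝ):ℂ) ^ (-(1/2) - Complex.I * lam : ℂ))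
      = ((Real.pi:ℂ) ^ (-(1/2):ℂ) * (Real.pi:ℂ) ^ (-(1/2):ℂ)) * (uu x ^ m * uu x ^ (-n:ℤ))
        * (((1+x^2:ℝ):ℂ) ^ (-(1/2) + Complex.I * lam : ℂ) * ((1+x^2:ℝ):ℂ) ^ (-(1/2) - Complex.I * lam : ℂ)) := by
        ring
    _ = (Real.pi : ℂ)⁻¹ * uu x ^ (m - n) * ((1 + x ^ 2 : ℝ) : ℂ)⁻¹ := by
        rw [e1, e2, e3]

lemma cont_uu : Continuous uu :=
  (Continuous.div (by continuity) (by continuity) hadd_ne)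

lemma integrable_F (k : ℤ) :
    Integrable (fun x : ℝ => uu x ^ k * ((1 + x ^ 2 : ℝ) : ℂ)⁻¹) := by
  apply Integrable.mono' integrable_inv_one_add_sq
  · exact ((cont_uu.zpow₀ k (fun x => Or.inl (uu_ne x))).mul
      ((Complex.continuous_ofReal.comp (by continuity)).inv₀
        (fun x => Complex.ofReal_ne_zero.mpr (by positivity)))).aestronglyMeasurable
  · filter_upwards with x
    rw [norm_mul, norm_zpow, norm_uu, one_zpow, one_mul, norm_inv,
      Complex.norm_real, Real.norm_of_nonneg (by positivity)]

lemma tendsto_inv_add_I {l : Filter ℝ} (h : Tendsto (fun x : ℝ => |x|) l atTop) :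
    Tendsto (fun x : ℝ => ((x : ℂ) + Complex.I)⁻¹) l (nhds 0) := by
  have habs : Tendsto (fun x : ℝ => ‖(x:ℂ) + Complex.I‖) l atTop := by
    apply tendsto_atTop_mono (fun x => ?_) h
    calc |x| = |((x:ℂ) + Complex.I).re| := by simp
      _ ≤ ‖(x:ℂ) + Complex.I‖ := Complex.abs_re_le_norm _
  rw [tendsto_zero_iff_norm_tendsto_zero]
  simpa [Function.comp_def] using tendsto_inv_atTop_zero.comp habs

lemma tendsto_uu {l : Filter ℝ} (h : Tendsto (fun x : ℝ => |x|) l atTop) :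
    Tendsto uu l (nhds 1) := by
  have : uu = fun x : ℝ => 1 - 2 * Complex.I * ((x : ℂ) + Complex.I)⁻¹ := by
    funext x
    rw [uu, div_eq_iff (hadd_ne x), sub_mul, mul_assoc,
      inv_mul_cancel₀ (hadd_ne x)]
    ring
  rw [this]
  have := (tendsto_inv_add_I h).const_mul (2 * Complex.I)
  simpa using (tendsto_const_nhds (x := (1:ℂ))).sub this

lemma integral_F_zero (k : ℤ) (hk : k ≠ 0) :
    ∫ x : ℝ, uu x ^ k * ((1 + x ^ 2 : ℝ) : ℂ)⁻¹ = 0 := by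
  have hk' : (k : ℂ) ≠ 0 := Int.cast_ne_zero.mpr hk
  have hden : (2 * Complex.I * k : ℂ) ≠ 0 := by
    simp [Complex.I_ne_zero, hk']
  set G : ℝ → ℂ := fun x => uu x ^ k / (2 * Complex.I * k) with hG
  have hderiv : ∀ x : ℝ, HasDerivAt G (uu x ^ k * ((1 + x ^ 2 : ℝ) : ℂ)⁻¹) x := by
    intro x
    have h1 : HasDerivAt (fun t : ℝ => ((t : ℂ) - Complex.I)) 1 x := by
      simpa using (Complex.ofRealCLM.hasDerivAt (x := x)).sub_const Complex.I
    have h2 : HasDerivAt (fun t : ℝ => ((t : ℂ) + Complex.I)) 1 x := by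
      simpa using (Complex.ofRealCLM.hasDerivAt (x := x)).add_const Complex.I
    have hu : HasDerivAt uu
        ((1 * ((x:ℂ) + Complex.I) - ((x:ℂ) - Complex.I) * 1) / ((x:ℂ) + Complex.I) ^ 2) x :=
      h1.div h2 (hadd_ne x)
    have hz : HasDerivAt (fun z : ℂ => z ^ k) ((k : ℂ) * uu x ^ (k - 1)) (uu x) :=
      hasDerivAt_zpow k (uu x) (Or.inl (uu_ne x))
    have huk : HasDerivAt (fun t : ℝ => uu t ^ k)
        ((k : ℂ) * uu x ^ (k - 1) *
          ((1 * ((x:ℂ) + Complex.I) - ((x:ℂ) - Complex.I) * 1) / ((x:ℂ) + Complex.I) ^ 2)) x :=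
      hz.comp x hu
    have := huk.div_const (2 * Complex.I * k)
    refine this.congr_deriv (Eq.symm ?_)
    have hfac : ((1 + x ^ 2 : ℝ) : ℂ) = ((x:ℂ) + Complex.I) * ((x:ℂ) - Complex.I) := by
      push_cast; ring_nf; simp [Complex.I_sq]; ring
    have h2I : (1 * ((x:ℂ) + Complex.I) - ((x:ℂ) - Complex.I) * 1) = 2 * Complex.I := by ring
    have huinv : (uu x)⁻¹ = ((x:ℂ) + Complex.I) / ((x:ℂ) - Complex.I) := by
      rw [uu, inv_div]
    rw [hfac, h2I, zpow_sub_one₀ (uu_ne x), huinv]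
    set v := uu x ^ k with hv
    field_simp [hsub_ne x, hadd_ne x, Complex.I_ne_zero]
  have hbot : Tendsto G atBot (nhds (1 / (2 * Complex.I * k))) := by
    have h1 : Tendsto (fun x : ℝ => uu x ^ k) atBot (nhds 1) := by
      have := (continuousAt_zpow₀ (1 : ℂ) k (Or.inl one_ne_zero)).tendsto
      simpa [Function.comp_def] using this.comp (tendsto_uu (tendsto_abs_atBot_atTop))
    simpa [hG] using h1.div_const (2 * Complex.I * k)
  have htop : Tendsto G atTop (nhds (1 / (2 * Complex.I * k))) := by
    have h1 : Tendsto (fun x : ℝ => uu x ^ k) atTop (nhds 1) := by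
      have := (continuousAt_zpow₀ (1 : ℂ) k (Or.inl one_ne_zero)).tendsto
      simpa [Function.comp_def] using this.comp (tendsto_uu (tendsto_abs_atTop_atTop))
    simpa [hG] using h1.div_const (2 * Complex.I * k)
  rw [integral_of_hasDerivAt_of_tendsto hderiv (integrable_F k) hbot htop]
  ring

/-- The family `(e_m^l)_{m ∈ ℤ}` is orthonormal in `L²(ℝ, ℂ)`. -/
theorem statement4 (lam : ℝ) (m n : ℤ) :
    (Integrable (fun x : ℝ => ellipticBasis lam m x * conj (ellipticBasis lam n x))
      (volume : Measure ℝ)) ∧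
    ((∫ x : ℝ, ellipticBasis lam m x * conj (ellipticBasis lam n x))
      = if m = n then 1 else 0) := by
  have hπ : (Real.pi : ℂ) ≠ 0 := Complex.ofReal_ne_zero.mpr Real.pi_ne_zero
  have hkey : (fun x : ℝ => ellipticBasis lam m x * conj (ellipticBasis lam n x))
      = fun x : ℝ => (Real.pi : ℂ)⁻¹ * (uu x ^ (m - n) * ((1 + x ^ 2 : ℝ) : ℂ)⁻¹) := by
    funext x; rw [key]; ring
  constructor
  · rw [hkey]
    exact (integrable_F (m - n)).const_mul _
  · rw [hkey, integral_const_mul]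
    by_cases h : m = n
    · subst h
      simp only [sub_self, zpow_zero, one_mul, if_pos rfl]
      have : ∫ x : ℝ, ((1 + x ^ 2 : ℝ) : ℂ)⁻¹ = ((∫ x : ℝ, (1 + x ^ 2)⁻¹ : ℝ) : ℂ) :=
        calc ∫ x : ℝ, ((1 + x ^ 2 : ℝ) : ℂ)⁻¹
            = ∫ x : ℝ, ((((1 + x ^ 2)⁻¹ : ℝ)) : ℂ) := by push_cast; rfl
          _ = ((∫ x : ℝ, (1 + x ^ 2)⁻¹ : ℝ) : ℂ) := integral_ofReal
      rw [this, integral_univ_inv_one_add_sq]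
      exact inv_mul_cancel₀ hπ
    · rw [if_neg h, integral_F_zero (m - n) (sub_ne_zero_of_ne h), mul_zero]
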